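/- Let x^0 > 0 and define the classic EM iteration x^{k+1} = P(x^k). Then the sequence {x^k} converges to a limit x* ≥ 0 that minimizes I_A^b over the nonnegative orthant ℝ_+^N, x* is a fixed point of the EM operator P, and I_A^b(x^k) decreases monotonically to min_{x ∈ ℝ_+^N} I_A^b(x). -/

import Mathlib

open Finset Filter Topology

noncomputable def dd {M N : ℕ} (A : Fin M → Fin N → ℝ) (x : Fin N → ℝ) (i : Fin M) : ℝ :=
  ∑ j, A i j * x j

noncomputable def ff {M N : ℕ} (A : Fin M → Fin N → ℝ) (b : Fin M → ℝ) (x : Fin N → ℝ) (j : Fin N) : ℝ :=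
  ∑ i, A i j * b i / dd A x i

noncomputable def EMop {M N : ℕ} (A : Fin M → Fin N → ℝ) (b : Fin M → ℝ) (x : Fin N → ℝ) : Fin N → ℝ :=
  fun j => x j * ff A b x j

noncomputable def KL {N : ℕ} (u v : Fin N → ℝ) : ℝ :=
  (∑ j, u j * Real.log (u j / v j)) - ∑ j, (u j - v j)

noncomputable def IAb {M N : ℕ} (A : Fin M → Fin N → ℝ) (b : Fin M → ℝ) (x : Fin N → ℝ) : ℝ :=
  (∑ i, b i * Real.log (b i / dd A x i)) - ∑ i, (b i - dd A x i)

noncomputable def finSup0 {ι : Type*} (s : Finset ι) (g : ι → ℝ) : ℝ :=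
  if h : s.Nonempty then s.sup' h g else 0

noncomputable def finInf0 {ι : Type*} (s : Finset ι) (g : ι → ℝ) : ℝ :=
  if h : s.Nonempty then s.inf' h g else 0

/-! ### elementary inequalities for g t = t - 1 - log t -/

lemma g_nonneg {t : ℝ} (ht : 0 < t) : 0 ≤ t - 1 - Real.log t := by
  have := Real.log_le_sub_one_of_pos ht; linarith

lemma g_pos {t : ℝ} (ht : 0 < t) (ht1 : t ≠ 1) : 0 < t - 1 - Real.log t := by
  have := Real.log_lt_sub_one_of_pos ht ht1; linarith

lemma g_anti {s t : ℝ} (hs : 0 < s) (hst : s ≤ t) (ht : t ≤ 1) :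
    t - 1 - Real.log t ≤ s - 1 - Real.log s := by
  have ht0 : 0 < t := lt_of_lt_of_le hs hst
  have h1 : Real.log (s / t) ≤ s / t - 1 := Real.log_le_sub_one_of_pos (div_pos hs ht0)
  have h2 : Real.log (s / t) = Real.log s - Real.log t := Real.log_div (ne_of_gt hs) (ne_of_gt ht0)
  have h3 : s / t - 1 = (s - t) / t := by field_simp
  have h4 : (s - t) / t ≤ s - t := by
    have hst' : s - t ≤ 0 := by linarith
    have h1t : 1 ≤ 1 / t := by rw [le_div_iff₀ ht0]; linarith
    calc (s - t) / t = (s-t) * (1/t) := by ring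
      _ ≤ (s - t) * 1 := mul_le_mul_of_nonpos_left h1t hst'
      _ = s - t := by ring
  linarith [h1, h2.symm.le, h3]

lemma g_mono {s t : ℝ} (hs : 1 ≤ s) (hst : s ≤ t) :
    s - 1 - Real.log s ≤ t - 1 - Real.log t := by
  have hs0 : 0 < s := lt_of_lt_of_le one_pos hs
  have ht0 : 0 < t := lt_of_lt_of_le hs0 hst
  have h1 : Real.log (t / s) ≤ t / s - 1 := Real.log_le_sub_one_of_pos (div_pos ht0 hs0)
  have h2 : Real.log (t / s) = Real.log t - Real.log s := Real.log_div (ne_of_gt ht0) (ne_of_gt hs0)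
  have h4 : t / s - 1 ≤ t - s := by
    rw [div_sub' (ne_of_gt hs0), div_le_iff₀ hs0]; nlinarith
  linarith

lemma log_ge_one_sub_inv {t : ℝ} (ht : 0 < t) : 1 - 1 / t ≤ Real.log t := by
  have h := Real.log_le_sub_one_of_pos (show (0:ℝ) < 1/t by positivity)
  rw [Real.log_div one_ne_zero (ne_of_gt ht), Real.log_one] at h
  have : 0 < 1 / t := by positivity
  linarith

/-- Jensen for log. -/
lemma jensen_log {ι : Type*} {s : Finset ι} {w p : ι → ℝ}
    (hw : ∀ i ∈ s, 0 ≤ w i) (hw1 : ∑ i ∈ s, w i = 1) (hp : ∀ i ∈ s, 0 < p i) :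
    ∑ i ∈ s, w i * Real.log (p i) ≤ Real.log (∑ i ∈ s, w i * p i) := by
  have h := (strictConcaveOn_log_Ioi.concaveOn).le_map_sum (t := s) (p := p) hw hw1
    (fun i hi => Set.mem_Ioi.2 (hp i hi))
  simpa [smul_eq_mul] using h

section EM

variable {M N : ℕ} {A : Fin M → Fin N → ℝ} {b : Fin M → ℝ}

lemma dd_pos (hA : ∀ i j, 0 ≤ A i j) (hrow : ∀ i, ∃ j, 0 < A i j)
    {y : Fin N → ℝ} (hy : ∀ j, 0 < y j) (i : Fin M) : 0 < dd A y i := by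
  obtain ⟨j, hj⟩ := hrow i
  exact Finset.sum_pos' (fun j _ => mul_nonneg (hA i j) (hy j).le)
    ⟨j, Finset.mem_univ j, mul_pos hj (hy j)⟩

lemma col_pos (hA : ∀ i j, 0 ≤ A i j) (hcol : ∀ j, ∑ i, A i j = 1) (j : Fin N) :
    ∃ i, 0 < A i j := by
  by_contra h
  push_neg at h
  have : ∑ i, A i j ≤ 0 := Finset.sum_nonpos (fun i _ => h i)
  rw [hcol j] at this; linarith

lemma ff_pos (hA : ∀ i j, 0 ≤ A i j) (hcol : ∀ j, ∑ i, A i j = 1) (hb : ∀ i, 0 < b i)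
    {y : Fin N → ℝ} (hd : ∀ i, 0 < dd A y i) (j : Fin N) : 0 < ff A b y j := by
  obtain ⟨i, hi⟩ := col_pos hA hcol j
  exact Finset.sum_pos' (fun i _ => div_nonneg (mul_nonneg (hA i j) (hb i).le) (hd i).le)
    ⟨i, Finset.mem_univ i, div_pos (mul_pos hi (hb i)) (hd i)⟩

lemma sum_dd (hcol : ∀ j, ∑ i, A i j = 1) (y : Fin N → ℝ) :
    ∑ i, dd A y i = ∑ j, y j := by
  unfold dd; rw [Finset.sum_comm]
  exact Finset.sum_congr rfl fun j _ => by rw [← Finset.sum_mul, hcol j, one_mul]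

/-- swap lemma : `∑ j, y j * ff A b z j = ∑ i, b i / dd A z i * dd A y i`. -/
lemma sum_mul_ff (z y : Fin N → ℝ) :
    ∑ j, y j * ff A b z j = ∑ i, b i / dd A z i * dd A y i := by
  unfold ff dd
  simp only [Finset.mul_sum, Finset.sum_mul]
  rw [Finset.sum_comm]
  refine Finset.sum_congr rfl fun i _ => Finset.sum_congr rfl fun j _ => by ring

lemma sum_EMop (hb : ∀ i, 0 < b i) {y : Fin N → ℝ} (hd : ∀ i, 0 < dd A y i) :
    ∑ j, EMop A b y j = ∑ i, b i := by
  unfold EMop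
  rw [sum_mul_ff]
  exact Finset.sum_congr rfl fun i _ => by rw [div_mul_eq_mul_div, mul_div_assoc,
    div_self (ne_of_gt (hd i)), mul_one]

end EM

section EM2

variable {M N : ℕ} {A : Fin M → Fin N → ℝ} {b : Fin M → ℝ}

lemma IAb_sub (hb : ∀ i, 0 < b i) {u v : Fin N → ℝ}
    (hdu : ∀ i, 0 < dd A u i) (hdv : ∀ i, 0 < dd A v i) :
    IAb A b u - IAb A b v =
      ∑ i, b i * Real.log (dd A v i / dd A u i) + (∑ i, dd A u i - ∑ i, dd A v i) := by
  unfold IAb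
  have hX : ∑ i, b i * Real.log (b i / dd A u i) - ∑ i, b i * Real.log (b i / dd A v i)
      = ∑ i, b i * Real.log (dd A v i / dd A u i) := by
    rw [← Finset.sum_sub_distrib]
    refine Finset.sum_congr rfl fun i _ => ?_
    rw [Real.log_div (hb i).ne' (hdu i).ne', Real.log_div (hb i).ne' (hdv i).ne',
      Real.log_div (hdv i).ne' (hdu i).ne']
    ring
  have hU : ∑ i, (b i - dd A u i) = ∑ i, b i - ∑ i, dd A u i := Finset.sum_sub_distrib _ _
  have hV : ∑ i, (b i - dd A v i) = ∑ i, b i - ∑ i, dd A v i := Finset.sum_sub_distrib _ _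
  linarith

lemma EMop_pos (hA : ∀ i j, 0 ≤ A i j) (hcol : ∀ j, ∑ i, A i j = 1)
    (hrow : ∀ i, ∃ j, 0 < A i j) (hb : ∀ i, 0 < b i)
    {y : Fin N → ℝ} (hy : ∀ j, 0 < y j) (j : Fin N) : 0 < EMop A b y j :=
  mul_pos (hy j) (ff_pos hA hcol hb (dd_pos hA hrow hy) j)

/-- first Jensen step -/
lemma FJ (hA : ∀ i j, 0 ≤ A i j) (hcol : ∀ j, ∑ i, A i j = 1)
    (hrow : ∀ i, ∃ j, 0 < A i j) (hb : ∀ i, 0 < b i)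
    {y : Fin N → ℝ} (hy : ∀ j, 0 < y j) :
    ∑ j, EMop A b y j * Real.log (ff A b y j)
      ≤ ∑ i, b i * Real.log (dd A (EMop A b y) i / dd A y i) := by
  have hd : ∀ i, 0 < dd A y i := dd_pos hA hrow hy
  have hf : ∀ j, 0 < ff A b y j := ff_pos hA hcol hb hd
  have key : ∀ i, ∑ j, (A i j * y j / dd A y i) * Real.log (ff A b y j)
      ≤ Real.log (dd A (EMop A b y) i / dd A y i) := by
    intro i
    have h1 : ∑ j, A i j * y j / dd A y i = 1 := by
      rw [← Finset.sum_div]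
      exact div_self (ne_of_gt (hd i))
    have h2 : ∑ j, (A i j * y j / dd A y i) * ff A b y j
        = dd A (EMop A b y) i / dd A y i := by
      rw [show dd A (EMop A b y) i = ∑ j, A i j * (y j * ff A b y j) from rfl,
        Finset.sum_div]
      exact Finset.sum_congr rfl fun j _ => by ring
    have h3 := jensen_log (s := Finset.univ)
      (w := fun j => A i j * y j / dd A y i) (p := fun j => ff A b y j)
      (fun j _ => div_nonneg (mul_nonneg (hA i j) (hy j).le) (hd i).le)
      h1 (fun j _ => hf j)
    rwa [h2] at h3
  calc ∑ j, EMop A b y j * Real.log (ff A b y j)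
      = ∑ i, b i * ∑ j, (A i j * y j / dd A y i) * Real.log (ff A b y j) := by
        simp only [Finset.mul_sum]
        rw [Finset.sum_comm]
        refine Finset.sum_congr rfl fun j _ => ?_
        have : ∀ i : Fin M, b i * (A i j * y j / dd A y i * Real.log (ff A b y j))
            = (A i j * b i / dd A y i) * (y j * Real.log (ff A b y j)) := fun i => by ring
        rw [Finset.sum_congr rfl fun i _ => this i, ← Finset.sum_mul,
          show (∑ i, A i j * b i / dd A y i) = ff A b y j from rfl, EMop]
        ring
    _ ≤ ∑ i, b i * Real.log (dd A (EMop A b y) i / dd A y i) :=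
        Finset.sum_le_sum fun i _ => mul_le_mul_of_nonneg_left (key i) (hb i).le

end EM2

section EM3

variable {M N : ℕ} {A : Fin M → Fin N → ℝ} {b : Fin M → ℝ}

lemma dd_EMop_pos (hA : ∀ i j, 0 ≤ A i j) (hcol : ∀ j, ∑ i, A i j = 1)
    (hrow : ∀ i, ∃ j, 0 < A i j) (hb : ∀ i, 0 < b i)
    {y : Fin N → ℝ} (hy : ∀ j, 0 < y j) (i : Fin M) : 0 < dd A (EMop A b y) i :=
  dd_pos hA hrow (EMop_pos hA hcol hrow hb hy) i

/-- E2 : value of KL (P y) y -/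
lemma KL_EMop_self (hA : ∀ i j, 0 ≤ A i j) (hcol : ∀ j, ∑ i, A i j = 1)
    (hrow : ∀ i, ∃ j, 0 < A i j) (hb : ∀ i, 0 < b i)
    {y : Fin N → ℝ} (hy : ∀ j, 0 < y j) :
    KL (EMop A b y) y = ∑ j, EMop A b y j * Real.log (ff A b y j)
      - (∑ i, b i - ∑ j, y j) := by
  have hd : ∀ i, 0 < dd A y i := dd_pos hA hrow hy
  unfold KL
  have h1 : ∀ j, EMop A b y j * Real.log (EMop A b y j / y j)
      = EMop A b y j * Real.log (ff A b y j) := by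
    intro j
    rw [show EMop A b y j = y j * ff A b y j from rfl,
      mul_comm (y j) (ff A b y j), mul_div_assoc, div_self (hy j).ne', mul_one]
  have h2 : ∑ j, (EMop A b y j - y j) = ∑ i, b i - ∑ j, y j := by
    rw [Finset.sum_sub_distrib, sum_EMop hb hd]
  rw [Finset.sum_congr rfl fun j _ => h1 j, h2]

/-- monotone decrease with KL defect -/
lemma decrease (hA : ∀ i j, 0 ≤ A i j) (hcol : ∀ j, ∑ i, A i j = 1)
    (hrow : ∀ i, ∃ j, 0 < A i j) (hb : ∀ i, 0 < b i)
    {y : Fin N → ℝ} (hy : ∀ j, 0 < y j) :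
    KL (EMop A b y) y ≤ IAb A b y - IAb A b (EMop A b y) := by
  have hd : ∀ i, 0 < dd A y i := dd_pos hA hrow hy
  have hdp : ∀ i, 0 < dd A (EMop A b y) i := dd_EMop_pos hA hcol hrow hb hy
  have E1 := IAb_sub (A := A) hb hd hdp
  have hsum : ∑ i, dd A y i - ∑ i, dd A (EMop A b y) i = ∑ j, y j - ∑ i, b i := by
    rw [sum_dd hcol, sum_dd hcol, sum_EMop hb hd]
  rw [KL_EMop_self hA hcol hrow hb hy]
  have := FJ hA hcol hrow hb hy
  linarith [E1, hsum, this]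

/-- pointwise : t log t ≥ t - 1 -/
lemma mul_log_ge {t : ℝ} (ht : 0 < t) : t - 1 ≤ t * Real.log t := by
  have := log_ge_one_sub_inv ht
  have h2 : t * (1 - 1/t) ≤ t * Real.log t := mul_le_mul_of_nonneg_left this ht.le
  have h3 : t * (1 - 1/t) = t - 1 := by field_simp
  linarith

/-- J3 : ∑ b log (dp/d) ≥ ∑ b - ∑ y -/
lemma J3 (hA : ∀ i j, 0 ≤ A i j) (hcol : ∀ j, ∑ i, A i j = 1)
    (hrow : ∀ i, ∃ j, 0 < A i j) (hb : ∀ i, 0 < b i)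
    {y : Fin N → ℝ} (hy : ∀ j, 0 < y j) :
    ∑ i, b i - ∑ j, y j ≤ ∑ i, b i * Real.log (dd A (EMop A b y) i / dd A y i) := by
  have hd : ∀ i, 0 < dd A y i := dd_pos hA hrow hy
  have hf : ∀ j, 0 < ff A b y j := ff_pos hA hcol hb hd
  have h1 : ∑ j, (EMop A b y j - y j) ≤ ∑ j, EMop A b y j * Real.log (ff A b y j) := by
    refine Finset.sum_le_sum fun j _ => ?_
    have := mul_log_ge (hf j)
    have h2 : y j * (ff A b y j - 1) ≤ y j * (ff A b y j * Real.log (ff A b y j)) :=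
      mul_le_mul_of_nonneg_left (by linarith) (hy j).le
    rw [show EMop A b y j = y j * ff A b y j from rfl]
    calc y j * ff A b y j - y j = y j * (ff A b y j - 1) := by ring
      _ ≤ y j * (ff A b y j * Real.log (ff A b y j)) := h2
      _ = y j * ff A b y j * Real.log (ff A b y j) := by ring
  have h3 : ∑ j, (EMop A b y j - y j) = ∑ i, b i - ∑ j, y j := by
    rw [Finset.sum_sub_distrib, sum_EMop hb hd]
  linarith [FJ hA hcol hrow hb hy]

end EM3

section EM4

variable {M N : ℕ} {A : Fin M → Fin N → ℝ} {b : Fin M → ℝ}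

lemma sum_log_div_split (hb : ∀ i, 0 < b i) {u v : Fin M → ℝ}
    (hu : ∀ i, 0 < u i) (hv : ∀ i, 0 < v i) :
    ∑ i, b i * Real.log (u i / v i)
      = ∑ i, b i * Real.log (u i) - ∑ i, b i * Real.log (v i) := by
  rw [← Finset.sum_sub_distrib]
  exact Finset.sum_congr rfl fun i _ => by
    rw [Real.log_div (hu i).ne' (hv i).ne']; ring

/-- The key inequality: for a fixed point z of the EM operator with positive dd,
and y > 0, we have IAb (P y) - IAb z ≤ KL z y - KL z (P y). -/
lemma keyineq (hA : ∀ i j, 0 ≤ A i j) (hcol : ∀ j, ∑ i, A i j = 1)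
    (hrow : ∀ i, ∃ j, 0 < A i j) (hb : ∀ i, 0 < b i)
    {z y : Fin N → ℝ} (hz0 : ∀ j, 0 ≤ z j)
    (hdz : ∀ i, 0 < dd A z i) (hzfix : EMop A b z = z) (hy : ∀ j, 0 < y j) :
    IAb A b (EMop A b y) - IAb A b z ≤ KL z y - KL z (EMop A b y) := by
  have hd : ∀ i, 0 < dd A y i := dd_pos hA hrow hy
  have hf : ∀ j, 0 < ff A b y j := ff_pos hA hcol hb hd
  have hp : ∀ j, 0 < EMop A b y j := EMop_pos hA hcol hrow hb hy
  have hdp : ∀ i, 0 < dd A (EMop A b y) i := dd_EMop_pos hA hcol hrow hb hy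
  have hfz1 : ∀ j, z j ≠ 0 → ff A b z j = 1 := by
    intro j hj
    have h := congrFun hzfix j
    rw [show EMop A b z j = z j * ff A b z j from rfl] at h
    have := mul_left_cancel₀ hj (h.trans (mul_one (z j)).symm)
    exact this
  have hsz : ∑ j, z j = ∑ i, b i := by
    conv_lhs => rw [← hzfix]
    exact sum_EMop hb hdz
  -- E3 : KL z y - KL z (P y) = ∑ z log f + (∑ y - ∑ b)
  have E3 : KL z y - KL z (EMop A b y)
      = ∑ j, z j * Real.log (ff A b y j) + (∑ j, y j - ∑ i, b i) := by
    unfold KL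
    have h1 : ∑ j, z j * Real.log (z j / y j) - ∑ j, z j * Real.log (z j / EMop A b y j)
        = ∑ j, z j * Real.log (ff A b y j) := by
      rw [← Finset.sum_sub_distrib]
      refine Finset.sum_congr rfl fun j _ => ?_
      rcases eq_or_ne (z j) 0 with h | h
      · simp [h]
      · have hzj : 0 < z j := lt_of_le_of_ne (hz0 j) (Ne.symm h)
        rw [Real.log_div hzj.ne' (hy j).ne', Real.log_div hzj.ne' (hp j).ne',
          show EMop A b y j = y j * ff A b y j from rfl,
          Real.log_mul (hy j).ne' (hf j).ne']
        ring
    have h2 : ∑ j, (z j - y j) = ∑ j, z j - ∑ j, y j := Finset.sum_sub_distrib _ _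
    have h3 : ∑ j, (z j - EMop A b y j) = ∑ j, z j - ∑ i, b i := by
      rw [Finset.sum_sub_distrib, sum_EMop hb hd]
    linarith
  -- J2 : ∑ b log (dz/d) ≤ ∑ z log f
  have J2 : ∑ i, b i * Real.log (dd A z i / dd A y i)
      ≤ ∑ j, z j * Real.log (ff A b y j) := by
    have perj : ∀ j, z j * ∑ i, (A i j * b i / dd A z i) * Real.log (dd A z i / dd A y i)
        ≤ z j * Real.log (ff A b y j) := by
      intro j
      rcases eq_or_ne (z j) 0 with h | h
      · simp [h]
      · have hzj : 0 < z j := lt_of_le_of_ne (hz0 j) (Ne.symm h)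
        refine mul_le_mul_of_nonneg_left ?_ hzj.le
        have hw1 : ∑ i, A i j * b i / dd A z i = 1 := hfz1 j h
        have hsum : ∑ i, (A i j * b i / dd A z i) * (dd A z i / dd A y i) = ff A b y j := by
          rw [show ff A b y j = ∑ i, A i j * b i / dd A y i from rfl]
          refine Finset.sum_congr rfl fun i _ => ?_
          rw [div_mul_div_comm, mul_comm (dd A z i) (dd A y i),
            mul_div_mul_right _ _ (hdz i).ne']
        have h3 := jensen_log (s := Finset.univ)
          (w := fun i => A i j * b i / dd A z i) (p := fun i => dd A z i / dd A y i)
          (fun i _ => div_nonneg (mul_nonneg (hA i j) (hb i).le) (hdz i).le)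
          hw1 (fun i _ => div_pos (hdz i) (hd i))
        rwa [hsum] at h3
    have hswap : ∑ j, z j * ∑ i, (A i j * b i / dd A z i) * Real.log (dd A z i / dd A y i)
        = ∑ i, b i * Real.log (dd A z i / dd A y i) := by
      simp only [Finset.mul_sum]
      rw [Finset.sum_comm]
      refine Finset.sum_congr rfl fun i _ => ?_
      have hterm : ∀ j : Fin N, z j * (A i j * b i / dd A z i * Real.log (dd A z i / dd A y i))
          = (A i j * z j) * (b i / dd A z i * Real.log (dd A z i / dd A y i)) := fun j => by ring
      rw [Finset.sum_congr rfl fun j _ => hterm j, ← Finset.sum_mul,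
        show (∑ j, A i j * z j) = dd A z i from rfl]
      rw [← mul_assoc, mul_comm (dd A z i), div_mul_cancel₀ _ (hdz i).ne']
    calc ∑ i, b i * Real.log (dd A z i / dd A y i)
        = ∑ j, z j * ∑ i, (A i j * b i / dd A z i) * Real.log (dd A z i / dd A y i) :=
          hswap.symm
      _ ≤ ∑ j, z j * Real.log (ff A b y j) := Finset.sum_le_sum fun j _ => perj j
  -- E4 : IAb (P y) - IAb z = ∑ b log (dz/dp)
  have E4 : IAb A b (EMop A b y) - IAb A b z
      = ∑ i, b i * Real.log (dd A z i / dd A (EMop A b y) i) := by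
    have := IAb_sub (A := A) hb hdp hdz
    have htail : ∑ i, dd A (EMop A b y) i - ∑ i, dd A z i = 0 := by
      rw [sum_dd hcol, sum_dd hcol, sum_EMop hb hd, hsz]; ring
    linarith
  have S1 := sum_log_div_split (b := b) hb hdz hd
  have S2 := sum_log_div_split (b := b) hb hdp hd
  have S3 := sum_log_div_split (b := b) hb hdz hdp
  have hJ3 := J3 hA hcol hrow hb hy
  rw [E3, E4, S3]
  rw [S1] at J2
  rw [S2] at hJ3
  linarith

end EM4

section EM5

variable {M N : ℕ} {A : Fin M → Fin N → ℝ} {b : Fin M → ℝ}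

/-- minimality from KKT -/
lemma minim (hcol : ∀ j, ∑ i, A i j = 1) (hb : ∀ i, 0 < b i)
    {z : Fin N → ℝ} (hdz : ∀ i, 0 < dd A z i) (hsz : ∑ j, z j = ∑ i, b i)
    (hkkt : ∀ j, ff A b z j ≤ 1)
    {y : Fin N → ℝ} (hy0 : ∀ j, 0 ≤ y j) (hdy : ∀ i, 0 < dd A y i) :
    IAb A b z ≤ IAb A b y := by
  have E5 := IAb_sub (A := A) hb hdy hdz
  have t1 : ∑ i, dd A y i = ∑ j, y j := sum_dd hcol y
  have t2 : ∑ i, dd A z i = ∑ i, b i := by rw [sum_dd hcol, hsz]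
  have h1 : ∑ i, (b i - b i * (dd A y i / dd A z i))
      ≤ ∑ i, b i * Real.log (dd A z i / dd A y i) := by
    refine Finset.sum_le_sum fun i _ => ?_
    have hl := log_ge_one_sub_inv (div_pos (hdz i) (hdy i))
    rw [one_div_div] at hl
    have := mul_le_mul_of_nonneg_left hl (hb i).le
    calc b i - b i * (dd A y i / dd A z i) = b i * (1 - dd A y i / dd A z i) := by ring
      _ ≤ b i * Real.log (dd A z i / dd A y i) := this
  have h2 : ∑ i, (b i - b i * (dd A y i / dd A z i))
      = ∑ i, b i - ∑ j, y j * ff A b z j := by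
    rw [Finset.sum_sub_distrib, sum_mul_ff]
    congr 1
    exact Finset.sum_congr rfl fun i _ => by ring
  have h3 : ∑ j, y j * ff A b z j ≤ ∑ j, y j :=
    Finset.sum_le_sum fun j _ => by
      calc y j * ff A b z j ≤ y j * 1 := mul_le_mul_of_nonneg_left (hkkt j) (hy0 j)
        _ = y j := mul_one _
  linarith

lemma klt_eq {u v : ℝ} (hu : 0 < u) (hv : 0 < v) :
    u * Real.log (u / v) - (u - v) = u * (v / u - 1 - Real.log (v / u)) := by
  rw [Real.log_div hu.ne' hv.ne', Real.log_div hv.ne' hu.ne']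
  field_simp
  ring

lemma klt_nonneg {u v : ℝ} (hu : 0 ≤ u) (hv : 0 < v) :
    0 ≤ u * Real.log (u / v) - (u - v) := by
  rcases eq_or_lt_of_le hu with h | h
  · rw [← h]; simpa using hv.le
  · rw [klt_eq h hv]
    exact mul_nonneg h.le (g_nonneg (div_pos hv h))

lemma KL_nonneg {z v : Fin N → ℝ} (hz : ∀ j, 0 ≤ z j) (hv : ∀ j, 0 < v j) :
    0 ≤ KL z v := by
  unfold KL
  rw [← Finset.sum_sub_distrib]
  exact Finset.sum_nonneg fun j _ => klt_nonneg (hz j) (hv j)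

lemma IAb_eq_sum (y : Fin N → ℝ) :
    IAb A b y = ∑ i, (b i * Real.log (b i / dd A y i) - (b i - dd A y i)) := by
  unfold IAb; rw [← Finset.sum_sub_distrib]

lemma IAb_nonneg (hb : ∀ i, 0 < b i) {y : Fin N → ℝ} (hdy : ∀ i, 0 < dd A y i) :
    0 ≤ IAb A b y := by
  rw [IAb_eq_sum]
  exact Finset.sum_nonneg fun i _ => klt_nonneg (hb i).le (hdy i)

/-- lower bound on dd from an IAb bound -/
lemma dd_lower (hb : ∀ i, 0 < b i) {y : Fin N → ℝ} (hdy : ∀ i, 0 < dd A y i)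
    {T : ℝ} (hT : IAb A b y ≤ T) (hT0 : 0 ≤ T) (i : Fin M) :
    b i * Real.exp (-(T / b i + 2)) < dd A y i := by
  by_contra hcon
  push_neg at hcon
  have hterm : b i * Real.log (b i / dd A y i) - (b i - dd A y i) ≤ T := by
    refine le_trans ?_ hT
    rw [IAb_eq_sum]
    exact Finset.single_le_sum (fun i _ => klt_nonneg (hb i).le (hdy i)) (Finset.mem_univ i)
  rw [klt_eq (hb i) (hdy i)] at hterm
  set t := dd A y i / b i with hts
  have ht0 : 0 < t := div_pos (hdy i) (hb i)
  have hte : t ≤ Real.exp (-(T / b i + 2)) := by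
    rw [hts, div_le_iff₀ (hb i)]
    linarith [hcon, mul_comm (b i) (Real.exp (-(T / b i + 2)))]
  have hτ1 : Real.exp (-(T / b i + 2)) ≤ 1 := by
    rw [Real.exp_le_one_iff]
    have : 0 ≤ T / b i := div_nonneg hT0 (hb i).le
    linarith
  have hg := g_anti ht0 hte hτ1
  have : Real.exp (-(T / b i + 2)) - 1 - Real.log (Real.exp (-(T / b i + 2)))
      ≥ T / b i + 1 := by
    rw [Real.log_exp]
    have := Real.exp_pos (-(T / b i + 2))
    linarith
  have hfin : T + b i ≤ b i * (t - 1 - Real.log t) := by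
    have h2 : T / b i + 1 ≤ t - 1 - Real.log t := le_trans this hg
    have := mul_le_mul_of_nonneg_left h2 (hb i).le
    have hdiv : b i * (T / b i + 1) = T + b i := by
      rw [mul_add, mul_one, mul_div_cancel₀ _ (hb i).ne']
    linarith
  linarith [hb i]

end EM5

section EM6

variable {M N : ℕ} {A : Fin M → Fin N → ℝ} {b : Fin M → ℝ}

lemma tendsto_dd {v : ℕ → Fin N → ℝ} {z : Fin N → ℝ}
    (hv : Tendsto v atTop (nhds z)) (i : Fin M) :
    Tendsto (fun n => dd A (v n) i) atTop (nhds (dd A z i)) := by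
  unfold dd
  exact tendsto_finset_sum _ fun j _ =>
    tendsto_const_nhds.mul ((tendsto_pi_nhds.1 hv) j)

lemma tendsto_ff {v : ℕ → Fin N → ℝ} {z : Fin N → ℝ}
    (hv : Tendsto v atTop (nhds z)) (hdz : ∀ i, dd A z i ≠ 0) (j : Fin N) :
    Tendsto (fun n => ff A b (v n) j) atTop (nhds (ff A b z j)) := by
  unfold ff
  exact tendsto_finset_sum _ fun i _ =>
    tendsto_const_nhds.div (tendsto_dd hv i) (hdz i)

lemma tendsto_IAb (hb : ∀ i, 0 < b i) {v : ℕ → Fin N → ℝ} {z : Fin N → ℝ}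
    (hv : Tendsto v atTop (nhds z)) (hdz : ∀ i, dd A z i ≠ 0) :
    Tendsto (fun n => IAb A b (v n)) atTop (nhds (IAb A b z)) := by
  simp only [IAb_eq_sum]
  refine tendsto_finset_sum _ fun i _ => ?_
  refine Tendsto.sub (tendsto_const_nhds.mul ?_) (tendsto_const_nhds.sub (tendsto_dd hv i))
  exact ((tendsto_const_nhds.div (tendsto_dd hv i) (hdz i)).log
    (div_ne_zero (hb i).ne' (hdz i)))

/-- KL z (v n) → 0 when v n → z ≥ 0 -/
lemma tendsto_KL_zero {v : ℕ → Fin N → ℝ} {z : Fin N → ℝ}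
    (hv : Tendsto v atTop (nhds z)) (hz : ∀ j, 0 ≤ z j) :
    Tendsto (fun n => KL z (v n)) atTop (nhds 0) := by
  have hKL : ∀ w : Fin N → ℝ, KL z w
      = ∑ j, (z j * Real.log (z j / w j) - (z j - w j)) := fun w =>
    (Finset.sum_sub_distrib _ _).symm
  simp only [hKL]
  have h0 : (0 : ℝ) = ∑ j : Fin N, (0:ℝ) := by simp
  rw [h0]
  refine tendsto_finset_sum _ fun j _ => ?_
  rcases eq_or_lt_of_le (hz j) with h | h
  · have hvj := tendsto_pi_nhds.1 hv j
    rw [← h] at hvj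
    simp only [← h, zero_mul, zero_sub, sub_neg_eq_add, zero_add]
    exact hvj
  · have hlog : Tendsto (fun n => Real.log (z j / v n j)) atTop (nhds (Real.log (z j / z j))) :=
      (tendsto_const_nhds.div (tendsto_pi_nhds.1 hv j) h.ne').log
        (by rw [div_self h.ne']; exact one_ne_zero)
    have := ((tendsto_const_nhds (x := z j)).mul hlog).sub
      ((tendsto_const_nhds (x := z j)).sub (tendsto_pi_nhds.1 hv j))
    simpa [div_self h.ne'] using this

/-- key coordinate convergence: klt(u, v n) → 0 implies v n → u -/
lemma tendsto_of_klt {u : ℝ} (hu : 0 < u) {v : ℕ → ℝ} (hv : ∀ n, 0 < v n)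
    (h : Tendsto (fun n => u * Real.log (u / v n) - (u - v n)) atTop (nhds 0)) :
    Tendsto v atTop (nhds u) := by
  rw [Metric.tendsto_atTop]
  intro ε hε
  set ε' : ℝ := min (ε / 2) (u / 2) with hε'
  have hε'pos : 0 < ε' := lt_min (by linarith) (by linarith)
  have hε'u : ε' / u < 1 := by
    rw [div_lt_one hu]
    calc ε' ≤ u / 2 := min_le_right _ _
      _ < u := by linarith
  have h1pos : 0 < 1 - ε' / u := by linarith
  have hεu0 : 0 < ε' / u := div_pos hε'pos hu
  have hgl : 0 < (1 - ε'/u) - 1 - Real.log (1 - ε'/u) :=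
    g_pos h1pos (by intro hcon; nlinarith)
  have hgr : 0 < (1 + ε'/u) - 1 - Real.log (1 + ε'/u) :=
    g_pos (by linarith) (by intro hcon; nlinarith)
  set c : ℝ := min ((1 - ε'/u) - 1 - Real.log (1 - ε'/u))
    ((1 + ε'/u) - 1 - Real.log (1 + ε'/u)) with hc
  have hcpos : 0 < c := lt_min hgl hgr
  have hev := Metric.tendsto_atTop.1 h (u * c) (mul_pos hu hcpos)
  obtain ⟨K, hK⟩ := hev
  refine ⟨K, fun n hn => ?_⟩
  have hKn := hK n hn
  rw [Real.dist_eq, sub_zero] at hKn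
  have hklt : u * Real.log (u / v n) - (u - v n) < u * c := (le_abs_self _).trans_lt hKn
  rw [klt_eq hu (hv n)] at hklt
  have htpos : 0 < v n / u := div_pos (hv n) hu
  -- show |v n - u| < ε
  rw [Real.dist_eq]
  by_contra hcon2
  push_neg at hcon2
  have habs : ε' ≤ |v n - u| := le_trans (le_trans (min_le_left _ _) (by linarith)) hcon2
  have hcase : v n ≤ u - ε' ∨ u + ε' ≤ v n := by
    rcases abs_le'.mp (le_refl |v n - u|) with _
    rcases le_or_gt (v n) u with h1 | h1
    · left
      have : |v n - u| = u - v n := by rw [abs_sub_comm, abs_of_nonneg (by linarith)]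
      linarith [habs, this]
    · right
      have : |v n - u| = v n - u := abs_of_nonneg (by linarith)
      linarith [habs, this]
  have hglow : c ≤ (v n / u) - 1 - Real.log (v n / u) := by
    rcases hcase with h1 | h1
    · have ht1 : v n / u ≤ 1 - ε' / u := by
        rw [div_le_iff₀ hu] at *
        have : (1 - ε' / u) * u = u - ε' := by field_simp
        nlinarith
      have := g_anti htpos ht1 (by linarith)
      exact le_trans (min_le_left _ _) this
    · have ht1 : 1 + ε' / u ≤ v n / u := by
        rw [le_div_iff₀ hu]
        have : (1 + ε' / u) * u = u + ε' := by field_simp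
        linarith
      have := g_mono (by linarith : (1:ℝ) ≤ 1 + ε'/u) ht1
      exact le_trans (min_le_right _ _) this
  have := mul_le_mul_of_nonneg_left hglow hu.le
  linarith

end EM6

section EM7

variable {M N : ℕ} {A : Fin M → Fin N → ℝ} {b : Fin M → ℝ}

lemma KL_eq_sum (z w : Fin N → ℝ) :
    KL z w = ∑ j, (z j * Real.log (z j / w j) - (z j - w j)) :=
  (Finset.sum_sub_distrib _ _).symm

lemma KL_EMop_eq {y : Fin N → ℝ} (hy0 : ∀ j, 0 ≤ y j) :
    KL (EMop A b y) y
      = ∑ j, (y j * ff A b y j * Real.log (ff A b y j) - (y j * ff A b y j - y j)) := by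
  rw [KL_eq_sum]
  refine Finset.sum_congr rfl fun j _ => ?_
  rcases eq_or_lt_of_le (hy0 j) with h | h
  · rw [show EMop A b y j = y j * ff A b y j from rfl, ← h]
    simp
  · rw [show EMop A b y j = y j * ff A b y j from rfl, mul_comm (y j) (ff A b y j),
      mul_div_assoc, div_self h.ne', mul_one, mul_comm (ff A b y j) (y j)]

lemma tendsto_KL_EMop (hb : ∀ i, 0 < b i)
    {v : ℕ → Fin N → ℝ} {z : Fin N → ℝ}
    (hv : Tendsto v atTop (nhds z)) (hvpos : ∀ n j, 0 < v n j)
    (hz0 : ∀ j, 0 ≤ z j) (hdz : ∀ i, dd A z i ≠ 0) (hffz : ∀ j, ff A b z j ≠ 0) :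
    Tendsto (fun n => KL (EMop A b (v n)) (v n)) atTop (nhds (KL (EMop A b z) z)) := by
  have hrw : ∀ n, KL (EMop A b (v n)) (v n)
      = ∑ j, (v n j * ff A b (v n) j * Real.log (ff A b (v n) j)
          - (v n j * ff A b (v n) j - v n j)) := fun n => KL_EMop_eq (fun j => (hvpos n j).le)
  rw [KL_EMop_eq hz0]
  simp only [hrw]
  refine tendsto_finset_sum _ fun j _ => ?_
  have hvj := tendsto_pi_nhds.1 hv j
  have hfj := tendsto_ff (b := b) hv hdz j
  exact ((hvj.mul hfj).mul (hfj.log (hffz j))).sub ((hvj.mul hfj).sub hvj)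

end EM7

theorem stmt_3
    (M N : ℕ) (hM : 0 < M) (hN : 0 < N)
    (A : Fin M → Fin N → ℝ) (b : Fin M → ℝ)
    (hA : ∀ i j, 0 ≤ A i j)
    (hcol : ∀ j, ∑ i, A i j = 1)
    (hrow : ∀ i, ∃ j, 0 < A i j)
    (hb : ∀ i, 0 < b i)
    (x : ℕ → Fin N → ℝ)
    (hx0 : ∀ j, 0 < x 0 j)
    (hiter : ∀ k, x (k + 1) = EMop A b (x k)) :
    ∃ xs : Fin N → ℝ,
      Tendsto x atTop (nhds xs) ∧
      (∀ j, 0 ≤ xs j) ∧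
      (∀ y : Fin N → ℝ, (∀ j, 0 ≤ y j) → (∀ i, 0 < dd A y i) →
        IAb A b xs ≤ IAb A b y) ∧
      EMop A b xs = xs ∧
      Antitone (fun k => IAb A b (x k)) ∧
      Tendsto (fun k => IAb A b (x k)) atTop (nhds (IAb A b xs)) := by
  -- positivity along the orbit
  have hxpos : ∀ k j, 0 < x k j := by
    intro k
    induction k with
    | zero => exact hx0
    | succ k ih => rw [hiter k]; exact EMop_pos hA hcol hrow hb ih
  have hd : ∀ k i, 0 < dd A (x k) i := fun k => dd_pos hA hrow (hxpos k)
  -- monotone decrease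
  have hdec : ∀ k, IAb A b (x (k+1)) ≤ IAb A b (x k) := by
    intro k
    rw [hiter k]
    have h1 := decrease hA hcol hrow hb (hxpos k)
    have h2 := KL_nonneg (fun j => (EMop_pos hA hcol hrow hb (hxpos k) j).le) (hxpos k)
    linarith
  have hanti : Antitone fun k => IAb A b (x k) := antitone_nat_of_succ_le hdec
  have hIle : ∀ k, IAb A b (x k) ≤ IAb A b (x 0) := fun k => hanti (Nat.zero_le k)
  have hT0 : 0 ≤ IAb A b (x 0) := IAb_nonneg hb (hd 0)
  have hdd_lb : ∀ k i,
      b i * Real.exp (-(IAb A b (x 0) / b i + 2)) < dd A (x k) i :=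
    fun k i => dd_lower hb (hd k) (hIle k) hT0 i
  set S := ∑ i, b i with hS
  have hsum : ∀ k, ∑ j, x (k+1) j = S := fun k => by
    rw [hiter k]; exact sum_EMop hb (hd k)
  have hbdd : ∀ k j, x (k+1) j ≤ S := by
    intro k j
    calc x (k+1) j ≤ ∑ j', x (k+1) j' :=
          Finset.single_le_sum (fun j' _ => (hxpos (k+1) j').le) (Finset.mem_univ j)
      _ = S := hsum k
  -- compactness : subsequence limit z
  have hscomp : IsCompact (Set.Icc (0 : Fin N → ℝ) (fun _ => S)) := isCompact_Icc
  have hmem : ∀ n, x (n+1) ∈ Set.Icc (0 : Fin N → ℝ) (fun _ => S) := fun n =>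
    ⟨fun j => (hxpos (n+1) j).le, fun j => hbdd n j⟩
  obtain ⟨z, hzmem, φ, hφ, hφt⟩ := hscomp.tendsto_subseq hmem
  set ψ : ℕ → ℕ := fun n => φ n + 1 with hψdef
  have hψmono : StrictMono ψ := fun m n hmn => by
    simp only [hψdef]; exact Nat.add_lt_add_right (hφ hmn) 1
  have hψt : Tendsto (fun n => x (ψ n)) atTop (nhds z) := hφt
  have hz0 : ∀ j, 0 ≤ z j := fun j => hzmem.1 j
  have hdz : ∀ i, 0 < dd A z i := by
    intro i
    have hlim := tendsto_dd (A := A) hψt i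
    have hge : b i * Real.exp (-(IAb A b (x 0) / b i + 2)) ≤ dd A z i :=
      ge_of_tendsto' hlim fun n => (hdd_lb (ψ n) i).le
    have : 0 < b i * Real.exp (-(IAb A b (x 0) / b i + 2)) :=
      mul_pos (hb i) (Real.exp_pos _)
    linarith
  have hdz' : ∀ i, dd A z i ≠ 0 := fun i => (hdz i).ne'
  have hffz : ∀ j, 0 < ff A b z j := ff_pos hA hcol hb hdz
  -- I(z) is the inf of I along the orbit
  have hIψ : Tendsto (fun n => IAb A b (x (ψ n))) atTop (nhds (IAb A b z)) :=
    tendsto_IAb hb hψt hdz'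
  have hIinf : ∀ k, IAb A b z ≤ IAb A b (x k) := by
    intro k
    have hIψanti : Antitone fun n => IAb A b (x (ψ n)) := fun m n hmn =>
      hanti (hψmono.le_iff_le.mpr hmn)
    calc IAb A b z ≤ IAb A b (x (ψ k)) := hIψanti.le_of_tendsto hIψ k
      _ ≤ IAb A b (x k) := hanti (le_trans (Nat.le_succ k) (Nat.succ_le_of_lt
          (Nat.lt_succ_of_le (hφ.le_apply))))
  -- KL (P x^k) (x^k) → 0
  have hIbdd : BddBelow (Set.range fun k => IAb A b (x k)) := by
    refine ⟨0, ?_⟩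
    rintro y ⟨k, rfl⟩
    exact IAb_nonneg hb (hd k)
  have hIconv : Tendsto (fun k => IAb A b (x k)) atTop
      (nhds (⨅ k, IAb A b (x k))) := tendsto_atTop_ciInf hanti hIbdd
  have hdiff0 : Tendsto (fun k => IAb A b (x k) - IAb A b (x (k+1))) atTop (nhds 0) := by
    have h2 : Tendsto (fun k => IAb A b (x (k+1))) atTop (nhds (⨅ k, IAb A b (x k))) :=
      hIconv.comp (tendsto_add_atTop_nat 1)
    have := hIconv.sub h2
    simpa using this
  have hKL0 : Tendsto (fun k => KL (EMop A b (x k)) (x k)) atTop (nhds 0) := by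
    refine tendsto_of_tendsto_of_tendsto_of_le_of_le tendsto_const_nhds hdiff0
      (fun k => KL_nonneg (fun j => (EMop_pos hA hcol hrow hb (hxpos k) j).le) (hxpos k))
      (fun k => ?_)
    have := decrease hA hcol hrow hb (hxpos k)
    rw [hiter k]
    linarith
  have hKLψ : Tendsto (fun n => KL (EMop A b (x (ψ n))) (x (ψ n))) atTop (nhds 0) :=
    hKL0.comp hψmono.tendsto_atTop
  have hKLψ' : Tendsto (fun n => KL (EMop A b (x (ψ n))) (x (ψ n))) atTop
      (nhds (KL (EMop A b z) z)) :=
    tendsto_KL_EMop hb hψt (fun n j => hxpos (ψ n) j) hz0 hdz' (fun j => (hffz j).ne')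
  have hKLz : KL (EMop A b z) z = 0 := tendsto_nhds_unique hKLψ' hKLψ
  -- z is a fixed point
  have hfix : EMop A b z = z := by
    have hterms : ∀ j ∈ Finset.univ,
        (0:ℝ) ≤ z j * ff A b z j * Real.log (ff A b z j) - (z j * ff A b z j - z j) := by
      intro j _
      have h1 : ff A b z j * Real.log (ff A b z j) - (ff A b z j - 1)
          = ff A b z j * (1 / ff A b z j - 1 - Real.log (1 / ff A b z j)) := by
        rw [Real.log_div one_ne_zero (hffz j).ne', Real.log_one, mul_sub, mul_sub,
          mul_one_div, div_self (hffz j).ne']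
        ring
      have h2 : 0 ≤ ff A b z j * Real.log (ff A b z j) - (ff A b z j - 1) := by
        rw [h1]
        exact mul_nonneg (hffz j).le (g_nonneg (one_div_pos.mpr (hffz j)))
      have := mul_le_mul_of_nonneg_left h2 (hz0 j)
      calc (0:ℝ) = z j * 0 := by ring
        _ ≤ z j * (ff A b z j * Real.log (ff A b z j) - (ff A b z j - 1)) := this
        _ = z j * ff A b z j * Real.log (ff A b z j) - (z j * ff A b z j - z j) := by ring
    have hsum0 : ∑ j, (z j * ff A b z j * Real.log (ff A b z j)
        - (z j * ff A b z j - z j)) = 0 := by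
      rw [← KL_EMop_eq hz0, hKLz]
    have heach := (Finset.sum_eq_zero_iff_of_nonneg hterms).mp hsum0
    funext j
    rcases eq_or_lt_of_le (hz0 j) with h | h
    · rw [show EMop A b z j = z j * ff A b z j from rfl, ← h, zero_mul]
    · have hj := heach j (Finset.mem_univ j)
      have hzero : ff A b z j * Real.log (ff A b z j) - (ff A b z j - 1) = 0 := by
        have : z j * (ff A b z j * Real.log (ff A b z j) - (ff A b z j - 1)) = 0 := by
          rw [← hj]; ring
        rcases mul_eq_zero.mp this with h' | h'
        · exact absurd h' h.ne'
        · exact h'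
      have hf1 : ff A b z j = 1 := by
        by_contra hne
        have hinv : 1 / ff A b z j ≠ 1 := by
          intro hcon
          apply hne
          rw [div_eq_one_iff_eq (hffz j).ne'] at hcon
          exact hcon.symm
        have := g_pos (t := 1 / ff A b z j) (one_div_pos.mpr (hffz j)) hinv
        have h1 : ff A b z j * Real.log (ff A b z j) - (ff A b z j - 1)
            = ff A b z j * (1 / ff A b z j - 1 - Real.log (1 / ff A b z j)) := by
          rw [Real.log_div one_ne_zero (hffz j).ne', Real.log_one, mul_sub, mul_sub,
            mul_one_div, div_self (hffz j).ne']
          ring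
        rw [h1] at hzero
        have := mul_pos (hffz j) this
        linarith
      rw [show EMop A b z j = z j * ff A b z j from rfl, hf1, mul_one]
  -- KL z (x k) is antitone and → 0 ; hence x → z
  have hKLanti : ∀ k, KL z (x (k+1)) ≤ KL z (x k) := by
    intro k
    have hkey := keyineq hA hcol hrow hb hz0 hdz hfix (hxpos k)
    rw [← hiter k] at hkey
    have := hIinf (k+1)
    linarith
  have hKLanti' : Antitone fun k => KL z (x k) := antitone_nat_of_succ_le hKLanti
  have hKLbdd : BddBelow (Set.range fun k => KL z (x k)) := by
    refine ⟨0, ?_⟩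
    rintro y ⟨k, rfl⟩
    exact KL_nonneg hz0 (hxpos k)
  have hKLconv : Tendsto (fun k => KL z (x k)) atTop (nhds (⨅ k, KL z (x k))) :=
    tendsto_atTop_ciInf hKLanti' hKLbdd
  have hKLsub : Tendsto (fun n => KL z (x (ψ n))) atTop (nhds 0) :=
    tendsto_KL_zero hψt hz0
  have hiInf0 : (⨅ k, KL z (x k)) = 0 :=
    tendsto_nhds_unique (hKLconv.comp hψmono.tendsto_atTop) hKLsub
  have hKLto0 : Tendsto (fun k => KL z (x k)) atTop (nhds 0) := by
    rw [← hiInf0]; exact hKLconv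
  have hxconv : Tendsto x atTop (nhds z) := by
    rw [tendsto_pi_nhds]
    intro j
    have hterm0 : Tendsto (fun k => z j * Real.log (z j / x k j) - (z j - x k j))
        atTop (nhds 0) := by
      refine tendsto_of_tendsto_of_tendsto_of_le_of_le tendsto_const_nhds hKLto0
        (fun k => klt_nonneg (hz0 j) (hxpos k j)) (fun k => ?_)
      rw [KL_eq_sum]
      exact Finset.single_le_sum
        (fun j' _ => klt_nonneg (hz0 j') (hxpos k j')) (Finset.mem_univ j)
    rcases eq_or_lt_of_le (hz0 j) with h | h
    · have : ∀ k, z j * Real.log (z j / x k j) - (z j - x k j) = x k j := fun k => by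
        rw [← h]; ring
      rw [← h]
      simpa [this] using hterm0
    · exact tendsto_of_klt h (fun k => hxpos k j) hterm0
  -- KKT at z
  have hkkt : ∀ j, ff A b z j ≤ 1 := by
    intro j
    by_contra hgt
    push_neg at hgt
    rcases eq_or_lt_of_le (hz0 j) with h | h
    · -- z j = 0, but x k j eventually nondecreasing
      have hfj : Tendsto (fun k => ff A b (x k) j) atTop (nhds (ff A b z j)) :=
        tendsto_ff hxconv hdz' j
      obtain ⟨K, hK⟩ := (hfj.eventually_const_lt hgt).exists_forall_of_atTop
      have hmono : ∀ k, K ≤ k → x K j ≤ x k j := by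
        intro k hk
        induction k, hk using Nat.le_induction with
        | base => exact le_refl _
        | succ k hk ih =>
          have : x K j ≤ x k j * 1 := by rw [mul_one]; exact ih
          calc x K j ≤ x k j * 1 := this
            _ ≤ x k j * ff A b (x k) j :=
              mul_le_mul_of_nonneg_left (hK k hk).le (hxpos k j).le
            _ = x (k+1) j := by rw [hiter k]; rfl
      have hzj : x K j ≤ z j := by
        have hcj := tendsto_pi_nhds.1 hxconv j
        exact ge_of_tendsto hcj (Filter.eventually_atTop.2 ⟨K, hmono⟩)
      have := hxpos K j
      rw [← h] at hzj
      linarith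
    · -- z j > 0 so ff = 1
      have hj := congrFun hfix j
      rw [show EMop A b z j = z j * ff A b z j from rfl] at hj
      have : ff A b z j = 1 := mul_left_cancel₀ h.ne' (hj.trans (mul_one (z j)).symm)
      rw [this] at hgt
      exact lt_irrefl 1 hgt
  have hsz : ∑ j, z j = S := by
    conv_lhs => rw [← hfix]
    exact sum_EMop hb hdz
  exact ⟨z, hxconv, hz0,
    fun y hy0 hdy => minim hcol hb hdz hsz hkkt hy0 hdy,
    hfix, hanti, tendsto_IAb hb hxconv hdz'⟩
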